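/- Let n ≥ 1 and 1 ≤ m < 2^{n/2} be integers, let w ∈ {0,1}^n, and let P be a deterministic protocol given by a collection of at most 2^C pairwise disjoint rectangles covering {0,1}^{nm} × {0,1}^{nm}, each labeled 0 or 1. Let p be the fraction of instances (X,Y) lying in a 1-labeled rectangle, and let p_wrong be the fraction of instances (X,Y) lying in a 1-labeled rectangle for which w is not a solution to XOR-Missing-String on (X,Y). Then p ≤ 2^{−m+2}·2^C + p_wrong·2^{2n+2}. -/

import Mathlib

lemma half (n m : ℕ) (F : Finset (Fin m → Fin n → Bool))
    (g : (Fin m → Fin n → Bool) → Fin m → (Fin n → Bool))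
    (hg : Function.Injective g) :
    F.card ≤ 2 * (Finset.univ.filter (fun s : Fin n → Bool =>
      F.card ≤ 2 ^ (n + 1) * (F.filter (fun X => ∃ i, g X i = s)).card)).card ^ m := by
  set S := Finset.univ.filter (fun s : Fin n → Bool =>
      F.card ≤ 2 ^ (n + 1) * (F.filter (fun X => ∃ i, g X i = s)).card) with hS
  set G := F.filter (fun X => ∀ i, g X i ∈ S) with hGdef
  have hGcard : G.card ≤ S.card ^ m := by
    have h1 : G.card ≤ (Fintype.piFinset (fun _ : Fin m => S)).card := by
      apply Finset.card_le_card_of_injOn g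
      · intro X hX
        simp only [Finset.mem_coe, Fintype.mem_piFinset] at hX ⊢
        exact fun i => (Finset.mem_filter.mp hX).2 i
      · exact hg.injOn
    simpa [Fintype.card_piFinset] using h1
  have hbad : (F \ G).card * 2 ^ (n + 1) ≤ 2 ^ n * F.card := by
    have hsub : F \ G ⊆ (Finset.univ.filter (fun s => s ∉ S)).biUnion
        (fun s => F.filter (fun X => ∃ i, g X i = s)) := by
      intro X hX
      rw [Finset.mem_sdiff] at hX
      obtain ⟨hXF, hXG⟩ := hX
      have hex : ∃ i, g X i ∉ S := by
        by_contra h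
        push_neg at h
        exact hXG (Finset.mem_filter.mpr ⟨hXF, h⟩)
      obtain ⟨i, hi⟩ := hex
      rw [Finset.mem_biUnion]
      exact ⟨g X i, by simp [hi], Finset.mem_filter.mpr ⟨hXF, ⟨i, rfl⟩⟩⟩
    calc (F \ G).card * 2 ^ (n + 1)
        ≤ (∑ s ∈ Finset.univ.filter (fun s => s ∉ S),
            (F.filter (fun X => ∃ i, g X i = s)).card) * 2 ^ (n + 1) :=
          Nat.mul_le_mul_right _ ((Finset.card_le_card hsub).trans Finset.card_biUnion_le)
      _ = ∑ s ∈ Finset.univ.filter (fun s => s ∉ S),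
            (F.filter (fun X => ∃ i, g X i = s)).card * 2 ^ (n + 1) := Finset.sum_mul _ _ _
      _ ≤ ∑ _s ∈ Finset.univ.filter (fun s => s ∉ S), F.card := by
          apply Finset.sum_le_sum
          intro s hs
          rw [Finset.mem_filter, hS, Finset.mem_filter] at hs
          have := hs.2
          simp only [Finset.mem_univ, true_and, not_le] at this
          rw [mul_comm]
          exact this.le
      _ = (Finset.univ.filter (fun s => s ∉ S)).card * F.card := by
          rw [Finset.sum_const, smul_eq_mul]
      _ ≤ 2 ^ n * F.card := by
          apply Nat.mul_le_mul_right
          calc (Finset.univ.filter (fun s => s ∉ S)).card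
              ≤ (Finset.univ : Finset (Fin n → Bool)).card := Finset.card_filter_le _ _
            _ = 2 ^ n := by simp [Fintype.card_fun]
  have hsplit : (F \ G).card + G.card = F.card :=
    Finset.card_sdiff_add_card_eq_card (Finset.filter_subset _ _)
  have h2 : 2 * (F \ G).card ≤ F.card := by
    have : 2 ^ n * (2 * (F \ G).card) ≤ 2 ^ n * F.card := by
      calc 2 ^ n * (2 * (F \ G).card) = (F \ G).card * 2 ^ (n + 1) := by ring
        _ ≤ 2 ^ n * F.card := hbad
    exact Nat.le_of_mul_le_mul_left this (by positivity)
  omega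


lemma rect (n m : ℕ) (w : Fin n → Bool) (A B : Finset (Fin m → Fin n → Bool)) :
    A.card * B.card * 2 ^ m ≤ 4 * 2 ^ (2 * n * m)
      + ((A ×ˢ B).filter (fun p : (Fin m → Fin n → Bool) × (Fin m → Fin n → Bool) =>
          ∃ i j : Fin m, w = fun u => Bool.xor (p.1 i u) (p.2 j u))).card
        * (2 ^ (2 * n + 2) * 2 ^ m) := by
  set Wc := ((A ×ˢ B).filter (fun p : (Fin m → Fin n → Bool) × (Fin m → Fin n → Bool) =>
          ∃ i j : Fin m, w = fun u => Bool.xor (p.1 i u) (p.2 j u))).card with hWc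
  by_cases hcase : A.card * B.card ≤ Wc * 2 ^ (2 * n + 2)
  · calc A.card * B.card * 2 ^ m ≤ Wc * 2 ^ (2 * n + 2) * 2 ^ m :=
        Nat.mul_le_mul_right _ hcase
      _ = Wc * (2 ^ (2 * n + 2) * 2 ^ m) := by ring
      _ ≤ _ := Nat.le_add_left _ _
  · push_neg at hcase
    have hA : A.card ≤ 2 * (Finset.univ.filter (fun s : Fin n → Bool =>
        A.card ≤ 2 ^ (n + 1) * (A.filter (fun X => ∃ i, X i = s)).card)).card ^ m :=
      half n m A (fun X => X) (fun _ _ h => h)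
    have hB : B.card ≤ 2 * (Finset.univ.filter (fun s : Fin n → Bool =>
        B.card ≤ 2 ^ (n + 1) *
          (B.filter (fun Y => ∃ j, (fun u => Bool.xor (Y j u) (w u)) = s)).card)).card ^ m := by
      apply half n m B (fun Y j u => Bool.xor (Y j u) (w u))
      intro Y Y' h
      funext j u
      have h2 := congrFun (congrFun h j) u
      simp only at h2
      cases hw : w u <;> rw [hw] at h2 <;> simpa using h2
    set S := Finset.univ.filter (fun s : Fin n → Bool =>
        A.card ≤ 2 ^ (n + 1) * (A.filter (fun X => ∃ i, X i = s)).card) with hSdef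
    set T := Finset.univ.filter (fun s : Fin n → Bool =>
        B.card ≤ 2 ^ (n + 1) *
          (B.filter (fun Y => ∃ j, (fun u => Bool.xor (Y j u) (w u)) = s)).card) with hTdef
    have hST : ∀ s, s ∈ S → s ∉ T := by
      intro s hsS hsT
      rw [hSdef, Finset.mem_filter] at hsS
      rw [hTdef, Finset.mem_filter] at hsT
      have hsA := hsS.2
      have hsB := hsT.2
      -- the product of the two filters consists of wrong pairs
      have hsub : (A.filter (fun X => ∃ i, X i = s)) ×ˢ
          (B.filter (fun Y => ∃ j, (fun u => Bool.xor (Y j u) (w u)) = s)) ⊆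
          (A ×ˢ B).filter (fun p => ∃ i j : Fin m, w = fun u => Bool.xor (p.1 i u) (p.2 j u)) := by
        intro p hp
        rw [Finset.mem_product] at hp
        obtain ⟨hp1, hp2⟩ := hp
        rw [Finset.mem_filter] at hp1 hp2
        obtain ⟨i, hi⟩ := hp1.2
        obtain ⟨j, hj⟩ := hp2.2
        rw [Finset.mem_filter, Finset.mem_product]
        refine ⟨⟨hp1.1, hp2.1⟩, i, j, ?_⟩
        funext u
        have h1 : p.1 i u = s u := by rw [hi]
        have h2 : Bool.xor (p.2 j u) (w u) = s u := congrFun hj u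
        rw [h1]
        cases hb : p.2 j u <;> cases hww : w u <;> simp_all
      have hcard : (A.filter (fun X => ∃ i, X i = s)).card *
          (B.filter (fun Y => ∃ j, (fun u => Bool.xor (Y j u) (w u)) = s)).card ≤ Wc := by
        rw [hWc, ← Finset.card_product]
        exact Finset.card_le_card hsub
      have hlarge : A.card * B.card ≤ Wc * 2 ^ (2 * n + 2) := by
        calc A.card * B.card
            ≤ (2 ^ (n + 1) * (A.filter (fun X => ∃ i, X i = s)).card) *
              (2 ^ (n + 1) *
                (B.filter (fun Y => ∃ j, (fun u => Bool.xor (Y j u) (w u)) = s)).card) :=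
              Nat.mul_le_mul hsA hsB
          _ = ((A.filter (fun X => ∃ i, X i = s)).card *
                (B.filter (fun Y => ∃ j, (fun u => Bool.xor (Y j u) (w u)) = s)).card)
              * (2 ^ (n + 1) * 2 ^ (n + 1)) := by ring
          _ ≤ Wc * (2 ^ (n + 1) * 2 ^ (n + 1)) := Nat.mul_le_mul_right _ hcard
          _ = Wc * 2 ^ (2 * n + 2) := by ring
      exact absurd hlarge (not_le.mpr hcase)
    have hdisj : Disjoint S T := Finset.disjoint_left.mpr hST
    have hsum : S.card + T.card ≤ 2 ^ n := by
      rw [← Finset.card_union_of_disjoint hdisj]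
      calc (S ∪ T).card ≤ (Finset.univ : Finset (Fin n → Bool)).card :=
          Finset.card_le_card (Finset.subset_univ _)
        _ = 2 ^ n := by simp [Fintype.card_fun]
    have key : 4 * (S.card * T.card) ≤ 2 ^ (2 * n) := by
      have h1 : 4 * (S.card * T.card) ≤ (S.card + T.card) ^ 2 := by nlinarith [two_mul_le_add_sq S.card T.card]
      calc 4 * (S.card * T.card) ≤ (S.card + T.card) ^ 2 := h1
        _ ≤ (2 ^ n) ^ 2 := Nat.pow_le_pow_left hsum 2
        _ = 2 ^ (2 * n) := by rw [← pow_mul]; congr 1; omega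
    have main : A.card * B.card * 2 ^ m ≤ 4 * 2 ^ (2 * n * m) := by
      calc A.card * B.card * 2 ^ m
          ≤ (2 * S.card ^ m) * (2 * T.card ^ m) * 2 ^ m := by
            exact Nat.mul_le_mul_right _ (Nat.mul_le_mul hA hB)
        _ = 4 * ((S.card * T.card) ^ m * 2 ^ m) := by rw [mul_pow]; ring
        _ ≤ 4 * ((S.card * T.card) ^ m * 4 ^ m) := by
            apply Nat.mul_le_mul_left
            exact Nat.mul_le_mul_left _ (Nat.pow_le_pow_left (by norm_num) m)
        _ = 4 * (4 * (S.card * T.card)) ^ m := by rw [mul_pow]; ring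
        _ ≤ 4 * (2 ^ (2 * n)) ^ m := Nat.mul_le_mul_left _ (Nat.pow_le_pow_left key m)
        _ = 4 * 2 ^ (2 * n * m) := by rw [← pow_mul]
    exact main.trans (Nat.le_add_right _ _)

/-- Relation between true positives and false positives of a deterministic Boolean-labeled
protocol (a partition into at most `2^C` labeled rectangles) with respect to a fixed candidate
answer `w` for XOR-Missing-String: `p ≤ 2^{-m+2}·2^C + p_wrong·2^{2n+2}`. -/
theorem stmt10 (n m : ℕ) (hn : 1 ≤ n) (hm : 1 ≤ m)
    (hm2 : (m : ℝ) < (2 : ℝ) ^ ((n : ℝ) / 2))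
    (w : Fin n → Bool) (C N : ℕ)
    (Rx Ry : Fin N → Finset (Fin m → Fin n → Bool)) (lab : Fin N → Bool)
    (hN : N ≤ 2 ^ C)
    (hpart : ∀ X Y : Fin m → Fin n → Bool, ∃! t : Fin N, X ∈ Rx t ∧ Y ∈ Ry t) :
    (((Finset.univ.filter
        (fun p : (Fin m → Fin n → Bool) × (Fin m → Fin n → Bool) =>
          ∃ t : Fin N, lab t = true ∧ p.1 ∈ Rx t ∧ p.2 ∈ Ry t)).card : ℝ) / 2 ^ (2 * n * m))
      ≤ 4 * (2 : ℝ) ^ C / 2 ^ m +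
        (((Finset.univ.filter
            (fun p : (Fin m → Fin n → Bool) × (Fin m → Fin n → Bool) =>
              (∃ t : Fin N, lab t = true ∧ p.1 ∈ Rx t ∧ p.2 ∈ Ry t) ∧
              ∃ i j : Fin m, w = fun u => Bool.xor (p.1 i u) (p.2 j u))).card : ℝ)
          / 2 ^ (2 * n * m)) * 2 ^ (2 * n + 2) := by
  classical
  set trueset := Finset.univ.filter (fun t : Fin N => lab t = true) with htrueset
  have hdisj : ∀ t1 ∈ trueset, ∀ t2 ∈ trueset, t1 ≠ t2 →
      Disjoint (Rx t1 ×ˢ Ry t1) (Rx t2 ×ˢ Ry t2) := by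
    intro t1 _ t2 _ hne
    rw [Finset.disjoint_left]
    intro p hp1 hp2
    rw [Finset.mem_product] at hp1 hp2
    obtain ⟨t, _, hu⟩ := hpart p.1 p.2
    exact hne ((hu t1 hp1).trans (hu t2 hp2).symm)
  have hdisj2 : ∀ t1 ∈ trueset, ∀ t2 ∈ trueset, t1 ≠ t2 →
      Disjoint ((Rx t1 ×ˢ Ry t1).filter
        (fun p => ∃ i j : Fin m, w = fun u => Bool.xor (p.1 i u) (p.2 j u)))
        ((Rx t2 ×ˢ Ry t2).filter
        (fun p => ∃ i j : Fin m, w = fun u => Bool.xor (p.1 i u) (p.2 j u))) := by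
    intro t1 h1 t2 h2 hne
    exact Finset.disjoint_filter_filter (hdisj t1 h1 t2 h2 hne)
  have hP1 : (Finset.univ.filter
        (fun p : (Fin m → Fin n → Bool) × (Fin m → Fin n → Bool) =>
          ∃ t : Fin N, lab t = true ∧ p.1 ∈ Rx t ∧ p.2 ∈ Ry t))
      = trueset.biUnion (fun t => Rx t ×ˢ Ry t) := by
    ext p
    simp only [Finset.mem_filter, Finset.mem_univ, true_and, Finset.mem_biUnion,
      Finset.mem_product, htrueset]
  have hPW : (Finset.univ.filter
        (fun p : (Fin m → Fin n → Bool) × (Fin m → Fin n → Bool) =>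
          (∃ t : Fin N, lab t = true ∧ p.1 ∈ Rx t ∧ p.2 ∈ Ry t) ∧
          ∃ i j : Fin m, w = fun u => Bool.xor (p.1 i u) (p.2 j u)))
      = trueset.biUnion (fun t => (Rx t ×ˢ Ry t).filter
          (fun p => ∃ i j : Fin m, w = fun u => Bool.xor (p.1 i u) (p.2 j u))) := by
    ext p
    simp only [Finset.mem_filter, Finset.mem_univ, true_and, Finset.mem_biUnion,
      Finset.mem_product, htrueset]
    tauto
  have hmain : (Finset.univ.filter
        (fun p : (Fin m → Fin n → Bool) × (Fin m → Fin n → Bool) =>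
          ∃ t : Fin N, lab t = true ∧ p.1 ∈ Rx t ∧ p.2 ∈ Ry t)).card * 2 ^ m
      ≤ 2 ^ C * (4 * 2 ^ (2 * n * m))
        + (Finset.univ.filter
        (fun p : (Fin m → Fin n → Bool) × (Fin m → Fin n → Bool) =>
          (∃ t : Fin N, lab t = true ∧ p.1 ∈ Rx t ∧ p.2 ∈ Ry t) ∧
          ∃ i j : Fin m, w = fun u => Bool.xor (p.1 i u) (p.2 j u))).card
          * (2 ^ (2 * n + 2) * 2 ^ m) := by
    rw [hP1, hPW, Finset.card_biUnion hdisj, Finset.card_biUnion hdisj2,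
      Finset.sum_mul, Finset.sum_mul]
    calc (∑ t ∈ trueset, (Rx t ×ˢ Ry t).card * 2 ^ m)
        ≤ ∑ t ∈ trueset, (4 * 2 ^ (2 * n * m)
            + ((Rx t ×ˢ Ry t).filter
              (fun p => ∃ i j : Fin m, w = fun u => Bool.xor (p.1 i u) (p.2 j u))).card
              * (2 ^ (2 * n + 2) * 2 ^ m)) := by
          apply Finset.sum_le_sum
          intro t _
          rw [Finset.card_product]
          exact rect n m w (Rx t) (Ry t)
      _ = trueset.card * (4 * 2 ^ (2 * n * m))
          + ∑ t ∈ trueset, ((Rx t ×ˢ Ry t).filter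
              (fun p => ∃ i j : Fin m, w = fun u => Bool.xor (p.1 i u) (p.2 j u))).card
              * (2 ^ (2 * n + 2) * 2 ^ m) := by
          rw [Finset.sum_add_distrib, Finset.sum_const, smul_eq_mul]
      _ ≤ 2 ^ C * (4 * 2 ^ (2 * n * m))
          + ∑ t ∈ trueset, ((Rx t ×ˢ Ry t).filter
              (fun p => ∃ i j : Fin m, w = fun u => Bool.xor (p.1 i u) (p.2 j u))).card
              * (2 ^ (2 * n + 2) * 2 ^ m) := by
          apply Nat.add_le_add_right
          apply Nat.mul_le_mul_right
          calc trueset.card ≤ (Finset.univ : Finset (Fin N)).card := Finset.card_filter_le _ _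
            _ = N := by simp
            _ ≤ 2 ^ C := hN
  -- convert to ℝ
  have hcast : ((Finset.univ.filter
        (fun p : (Fin m → Fin n → Bool) × (Fin m → Fin n → Bool) =>
          ∃ t : Fin N, lab t = true ∧ p.1 ∈ Rx t ∧ p.2 ∈ Ry t)).card : ℝ) * 2 ^ m
      ≤ 2 ^ C * (4 * 2 ^ (2 * n * m))
        + ((Finset.univ.filter
        (fun p : (Fin m → Fin n → Bool) × (Fin m → Fin n → Bool) =>
          (∃ t : Fin N, lab t = true ∧ p.1 ∈ Rx t ∧ p.2 ∈ Ry t) ∧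
          ∃ i j : Fin m, w = fun u => Bool.xor (p.1 i u) (p.2 j u))).card : ℝ)
          * (2 ^ (2 * n + 2) * 2 ^ m) := by
    exact_mod_cast hmain
  have h2m : (0:ℝ) < 2 ^ m := by positivity
  have h2nm : (0:ℝ) < 2 ^ (2 * n * m) := by positivity
  rw [div_le_iff₀ h2nm]
  have h1 := (le_div_iff₀ h2m).mpr hcast
  refine h1.trans (le_of_eq ?_)
  field_simp
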